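/- Let m ≥ 2 be an integer and x > 0. Then φ_m'(x) = ((m−1)!/(−x)^m) · (e^{−x} − ∑_{i=0}^{m−1} (−x)^i/i!). -/

import Mathlib

open Real MeasureTheory Filter

/-- The digamma function psi(x) = Gamma'(x)/Gamma(x). -/
noncomputable def psi (x : ℝ) : ℝ := deriv Real.Gamma x / Real.Gamma x

/-- phi_m(x) = e^{-x} * sum_j (x^j/j!) psi(j+m). -/
noncomputable def phi (m x : ℝ) : ℝ :=
  Real.exp (-x) * ∑' j : ℕ, x ^ j / (Nat.factorial j : ℝ) * psi (j + m)

lemma psi_add_one {y : ℝ} (hy : 0 < y) : psi (y + 1) = psi y + 1 / y := by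
  have hne : ∀ z : ℝ, 0 < z → ∀ n : ℕ, z ≠ -n := fun z hz n =>
    ne_of_gt (lt_of_le_of_lt (neg_nonpos.mpr (Nat.cast_nonneg n)) (by linarith))
  have hΓy : HasDerivAt Real.Gamma (deriv Real.Gamma y) y :=
    (Real.differentiableAt_Gamma (hne y hy)).hasDerivAt
  have hΓy1 : HasDerivAt Real.Gamma (deriv Real.Gamma (y + 1)) (y + 1) :=
    (Real.differentiableAt_Gamma (hne (y+1) (by linarith))).hasDerivAt
  have h1 : HasDerivAt (fun x => Real.Gamma (x + 1)) (deriv Real.Gamma (y + 1)) y := by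
    have h := hΓy1.comp y ((hasDerivAt_id y).add_const 1)
    simp only [mul_one] at h
    exact h
  have h2 : HasDerivAt (fun x => x * Real.Gamma x)
      (1 * Real.Gamma y + y * deriv Real.Gamma y) y := (hasDerivAt_id y).mul hΓy
  have heq : (fun x => Real.Gamma (x + 1)) =ᶠ[nhds y] fun x => x * Real.Gamma x := by
    filter_upwards [eventually_gt_nhds hy] with z hz
    exact Real.Gamma_add_one hz.ne'
  have h1' : HasDerivAt (fun x => x * Real.Gamma x) (deriv Real.Gamma (y + 1)) y :=
    h1.congr_of_eventuallyEq heq.symm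
  have key : deriv Real.Gamma (y + 1) = Real.Gamma y + y * deriv Real.Gamma y := by
    have := h1'.unique h2; linarith
  have hΓpos : 0 < Real.Gamma y := Real.Gamma_pos_of_pos hy
  unfold psi
  rw [key, Real.Gamma_add_one hy.ne']
  field_simp
  ring

lemma psi_bound {m : ℝ} (hm : 1 ≤ m) (n : ℕ) : |psi (m + n)| ≤ |psi m| + n := by
  induction n with
  | zero => simp
  | succ k ih =>
    have hk : (0:ℝ) ≤ k := Nat.cast_nonneg k
    have hmk : (0:ℝ) < m + k := by linarith
    have hrec : psi (m + (k+1 : ℕ)) = psi (m + k) + 1 / (m + k) := by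
      push_cast
      rw [show m + (k + 1 : ℝ) = (m + k) + 1 by ring, psi_add_one hmk]
    rw [hrec]
    have h1 : 1 / (m + k) ≤ 1 := by
      rw [div_le_one hmk]; linarith
    have h2 : 0 < 1 / (m + k) := by positivity
    push_cast
    calc |psi (m + k) + 1 / (m + k)| ≤ |psi (m + k)| + |1 / (m + k)| := abs_add_le _ _
      _ ≤ (|psi m| + k) + 1 := by
          rw [abs_of_pos h2]; linarith
      _ = |psi m| + (k + 1) := by ring

lemma sum_helper (A R : ℝ) : Summable (fun n : ℕ => (A + n) * R ^ n / n.factorial) := by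
  have h1 : Summable (fun n : ℕ => A * (R ^ n / n.factorial)) :=
    (Real.summable_pow_div_factorial R).mul_left A
  have h2 : Summable (fun n : ℕ => (n : ℝ) * R ^ n / n.factorial) := by
    apply (summable_nat_add_iff 1).mp
    apply ((Real.summable_pow_div_factorial R).mul_left R).congr
    intro n
    have hfac : ((n+1).factorial : ℝ) = (n+1) * n.factorial := by
      push_cast [Nat.factorial_succ]; ring
    have h0 : (n.factorial : ℝ) ≠ 0 := Nat.cast_ne_zero.mpr (Nat.factorial_ne_zero n)
    push_cast [hfac]
    field_simp
    ring
  apply (h1.add h2).congr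
  intro n; ring

lemma exp_tsum (y : ℝ) : Real.exp y = ∑' n : ℕ, y ^ n / n.factorial := by
  rw [Real.exp_eq_exp_ℝ, NormedSpace.exp_eq_tsum_div]

noncomputable def Lf (k : ℕ) (y : ℝ) : ℝ :=
  ∑' j : ℕ, y ^ (j + k + 1) / ((j.factorial : ℝ) * (j + k + 1))

noncomputable def Rf (k : ℕ) (y : ℝ) : ℝ :=
  (k.factorial : ℝ) * (-1) ^ (k + 1) *
    (1 - Real.exp y * ∑ i ∈ Finset.range (k + 1), (-y) ^ i / (i.factorial : ℝ))

lemma hasDerivAt_Lf (k : ℕ) (y : ℝ) : HasDerivAt (Lf k) (y ^ k * Real.exp y) y := by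
  set R : ℝ := |y| + 1 with hR
  have hab := abs_nonneg y
  have hR1 : (1:ℝ) ≤ R := by linarith
  have hyR : y ∈ Metric.ball (0:ℝ) R := by
    simp only [Metric.mem_ball, dist_zero_right, Real.norm_eq_abs, hR]; linarith
  have h0R : (0:ℝ) ∈ Metric.ball (0:ℝ) R := by simp; linarith
  have hu : Summable (fun j : ℕ => R ^ k * (R ^ j / j.factorial)) :=
    (Real.summable_pow_div_factorial R).mul_left _
  have key : HasDerivAt (fun z : ℝ => ∑' j : ℕ, z ^ (j + k + 1) / ((j.factorial : ℝ) * (j + k + 1)))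
      (∑' j : ℕ, y ^ (j + k) / (j.factorial : ℝ)) y := by
    refine hasDerivAt_tsum_of_isPreconnected
      (g' := fun (j : ℕ) (z : ℝ) => z ^ (j + k) / (j.factorial : ℝ))
      hu Metric.isOpen_ball (convex_ball (0:ℝ) R).isPreconnected
      (fun j z _ => ?_) (fun j z hz => ?_) h0R ?_ hyR
    · have h := (hasDerivAt_pow (j + k + 1) z).div_const ((j.factorial : ℝ) * ((j : ℝ) + k + 1))
      convert h using 1
      · rfl
      have hf : (j.factorial : ℝ) ≠ 0 := Nat.cast_ne_zero.mpr (Nat.factorial_ne_zero j)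
      have hjk : ((j:ℝ) + k + 1) ≠ 0 := by positivity
      push_cast
      field_simp
    · have hzR : |z| ≤ R := by
        rw [Metric.mem_ball, dist_zero_right, Real.norm_eq_abs] at hz; linarith
      have hb : ‖z ^ (j + k) / (j.factorial : ℝ)‖ ≤ R ^ (j + k) / j.factorial := by
        rw [norm_div, norm_pow, Real.norm_eq_abs, Real.norm_eq_abs,
          abs_of_nonneg (by positivity : (0:ℝ) ≤ (j.factorial : ℝ))]
        gcongr
      calc ‖z ^ (j + k) / (j.factorial : ℝ)‖ ≤ R ^ (j + k) / j.factorial := hb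
        _ = R ^ k * (R ^ j / j.factorial) := by rw [pow_add]; ring
    · apply Summable.congr summable_zero
      intro j
      simp [pow_succ, zero_pow]
  have heq : (∑' j : ℕ, y ^ (j + k) / (j.factorial : ℝ)) = y ^ k * Real.exp y := by
    rw [exp_tsum, ← tsum_mul_left]
    exact tsum_congr fun j => by rw [pow_add]; ring
  unfold Lf
  rw [← heq]
  exact key

lemma hasDerivAt_Rf (k : ℕ) (y : ℝ) : HasDerivAt (Rf k) (y ^ k * Real.exp y) y := by
  have hterm : ∀ i : ℕ, HasDerivAt (fun z : ℝ => (-z) ^ i / (i.factorial : ℝ))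
      ((i : ℝ) * (-y) ^ (i - 1) * (-1) / (i.factorial : ℝ)) y := fun i =>
    (HasDerivAt.comp y (hasDerivAt_pow i (-y)) (hasDerivAt_neg y)).div_const _
  have hsum := HasDerivAt.sum (fun i (_ : i ∈ Finset.range (k+1)) => hterm i)
  have hterm' : ∀ i : ℕ, ((i+1 : ℕ) : ℝ) * (-y) ^ (i + 1 - 1) * (-1) / (((i+1 : ℕ)).factorial : ℝ)
      = -((-y) ^ i / (i.factorial : ℝ)) := by
    intro i
    have hf : (i.factorial : ℝ) ≠ 0 := Nat.cast_ne_zero.mpr (Nat.factorial_ne_zero i)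
    rw [Nat.add_sub_cancel, Nat.factorial_succ]
    push_cast
    field_simp
  have hDeq : ∑ i ∈ Finset.range (k+1), ((i:ℝ) * (-y) ^ (i - 1) * (-1) / (i.factorial : ℝ))
      = -∑ i ∈ Finset.range k, (-y) ^ i / (i.factorial : ℝ) := by
    rw [Finset.sum_range_succ']
    rw [Finset.sum_congr rfl (fun i _ => hterm' i)]
    simp
  rw [hDeq] at hsum
  have hE := (Real.hasDerivAt_exp y).mul hsum
  have hfinal := ((hasDerivAt_const y (1:ℝ)).sub hE).const_mul ((k.factorial : ℝ) * (-1) ^ (k + 1))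
  convert hfinal using 1
  · rfl
  · rfl
  · funext w
    simp only [Rf, Finset.sum_apply, Pi.sub_apply, Pi.mul_apply]
  rw [Finset.sum_apply]
  rw [Finset.sum_range_succ, neg_pow y]
  have hf : (k.factorial : ℝ) ≠ 0 := Nat.cast_ne_zero.mpr (Nat.factorial_ne_zero k)
  have hsq : ((-1:ℝ)) ^ k * (-1) ^ k = 1 := by
    rw [← pow_add]; exact Even.neg_one_pow ⟨k, by ring⟩
  field_simp
  linear_combination (-(y ^ k * Real.exp y)) * hsq

lemma Lf_eq_Rf (k : ℕ) (y : ℝ) : Lf k y = Rf k y := by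
  have h : ∀ z : ℝ, HasDerivAt (fun w => Lf k w - Rf k w) 0 z := fun z => by
    have h := (hasDerivAt_Lf k z).sub (hasDerivAt_Rf k z)
    simp only [sub_self] at h
    exact h
  have hdiff : Differentiable ℝ (fun w => Lf k w - Rf k w) := fun z => (h z).differentiableAt
  have hc := is_const_of_deriv_eq_zero hdiff (fun z => (h z).deriv) y 0
  have hL0 : Lf k 0 = 0 := by
    unfold Lf
    have : ∀ j : ℕ, (0:ℝ) ^ (j + k + 1) / ((j.factorial : ℝ) * ((j:ℝ) + k + 1)) = 0 := by
      intro j; simp [pow_succ, zero_pow]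
    rw [tsum_congr this, tsum_zero]
  have hR0 : Rf k 0 = 0 := by
    unfold Rf
    have hP0 : ∑ i ∈ Finset.range (k + 1), (-(0:ℝ)) ^ i / (i.factorial : ℝ) = 1 := by
      rw [Finset.sum_eq_single 0]
      · simp
      · intro i _ hi
        simp [zero_pow hi]
      · simp
    rw [hP0]
    simp
  have : Lf k y - Rf k y = Lf k 0 - Rf k 0 := hc
  rw [hL0, hR0] at this
  linarith

theorem stmt16 (m : ℕ) (hm : 2 ≤ m) (x : ℝ) (hx : 0 < x) :
    deriv (phi m) x = ((Nat.factorial (m - 1) : ℝ) / (-x) ^ m) *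
      (Real.exp (-x) - ∑ i ∈ Finset.range m, (-x) ^ i / (Nat.factorial i : ℝ)) := by
  obtain ⟨k, rfl⟩ : ∃ k, m = k + 1 := ⟨m - 1, by omega⟩
  set C : ℝ := |psi ((k:ℝ) + 1)| with hC
  have hm1 : (1:ℝ) ≤ (k:ℝ) + 1 := by
    have : (0:ℝ) ≤ k := Nat.cast_nonneg k; linarith
  have psiB : ∀ j : ℕ, |psi ((j:ℝ) + ((k:ℝ) + 1))| ≤ C + j := by
    intro j; rw [add_comm]; exact psi_bound hm1 j
  set R : ℝ := |x| + 1 with hR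
  have hab := abs_nonneg x
  have hR1 : (1:ℝ) ≤ R := by linarith
  have hxR : x ∈ Metric.ball (0:ℝ) R := by
    simp only [Metric.mem_ball, dist_zero_right, Real.norm_eq_abs, hR]
    linarith [le_abs_self x]
  have h0R : (0:ℝ) ∈ Metric.ball (0:ℝ) R := by simp; linarith
  -- summable bound for derivatives
  have hu : Summable (fun j : ℕ => (C + j) * ((j:ℝ) * R ^ (j-1)) / j.factorial) := by
    apply (summable_nat_add_iff 1).mp
    apply (sum_helper (C+1) R).congr
    intro n
    have hf : (n.factorial : ℝ) ≠ 0 := Nat.cast_ne_zero.mpr (Nat.factorial_ne_zero n)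
    rw [Nat.add_sub_cancel, Nat.factorial_succ]
    push_cast
    field_simp
    ring
  have hbound : ∀ (j : ℕ) (z : ℝ), z ∈ Metric.ball (0:ℝ) R →
      ‖((j:ℝ) * z ^ (j-1) / j.factorial) * psi ((j:ℝ) + ((k:ℝ) + 1))‖ ≤
        (C + j) * ((j:ℝ) * R ^ (j-1)) / j.factorial := by
    intro j z hz
    have hzR : |z| ≤ R := by
      rw [Metric.mem_ball, dist_zero_right, Real.norm_eq_abs] at hz; linarith
    have h2 := psiB j
    calc ‖((j:ℝ) * z ^ (j-1) / j.factorial) * psi ((j:ℝ) + ((k:ℝ) + 1))‖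
        = ((j:ℝ) * |z| ^ (j-1) / j.factorial) * |psi ((j:ℝ) + ((k:ℝ) + 1))| := by
          rw [Real.norm_eq_abs, abs_mul, abs_div, abs_mul, abs_pow, Nat.abs_cast,
            Nat.abs_cast]
      _ ≤ ((j:ℝ) * R ^ (j-1) / j.factorial) * (C + j) := by
          gcongr
      _ = (C + j) * ((j:ℝ) * R ^ (j-1)) / j.factorial := by ring
  -- derivative of the series S
  have hS : HasDerivAt (fun z : ℝ => ∑' j : ℕ, z ^ j / (j.factorial : ℝ) * psi ((j:ℝ) + ((k:ℝ) + 1)))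
      (∑' j : ℕ, ((j:ℝ) * x ^ (j-1) / j.factorial) * psi ((j:ℝ) + ((k:ℝ) + 1))) x := by
    refine hasDerivAt_tsum_of_isPreconnected
      (g' := fun (j : ℕ) (z : ℝ) => ((j:ℝ) * z ^ (j-1) / j.factorial) * psi ((j:ℝ) + ((k:ℝ) + 1)))
      hu Metric.isOpen_ball (convex_ball (0:ℝ) R).isPreconnected
      (fun j z _ => ?_) hbound h0R ?_ hxR
    · exact ((hasDerivAt_pow j z).div_const (j.factorial : ℝ)).mul_const _
    · apply summable_of_ne_finset_zero (s := {0})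
      intro j hj
      simp only [Finset.mem_singleton] at hj
      simp [zero_pow hj]
  -- summability facts
  have hSum' : Summable (fun j : ℕ => ((j:ℝ) * x ^ (j-1) / j.factorial) * psi ((j:ℝ) + ((k:ℝ) + 1))) :=
    hu.of_norm_bounded (fun j => hbound j x hxR)
  have hSumS : Summable (fun j : ℕ => x ^ j / (j.factorial : ℝ) * psi ((j:ℝ) + ((k:ℝ) + 1))) := by
    apply (sum_helper C |x|).of_norm_bounded
    intro j
    have h2 := psiB j
    calc ‖x ^ j / (j.factorial : ℝ) * psi ((j:ℝ) + ((k:ℝ) + 1))‖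
        = (|x| ^ j / (j.factorial : ℝ)) * |psi ((j:ℝ) + ((k:ℝ) + 1))| := by
          rw [Real.norm_eq_abs, abs_mul, abs_div, abs_pow, Nat.abs_cast]
      _ ≤ (|x| ^ j / (j.factorial : ℝ)) * (C + j) := by
          gcongr
      _ = (C + j) * |x| ^ j / j.factorial := by ring
  have hSum2 : Summable (fun j : ℕ => x ^ j / (j.factorial : ℝ) * psi ((j:ℝ) + 1 + ((k:ℝ) + 1))) := by
    apply (sum_helper (C+1) |x|).of_norm_bounded
    intro j
    have h2 : |psi ((j:ℝ) + 1 + ((k:ℝ) + 1))| ≤ C + (j+1) := by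
      have := psiB (j+1)
      push_cast at this ⊢
      convert this using 3 <;> ring
    calc ‖x ^ j / (j.factorial : ℝ) * psi ((j:ℝ) + 1 + ((k:ℝ) + 1))‖
        = (|x| ^ j / (j.factorial : ℝ)) * |psi ((j:ℝ) + 1 + ((k:ℝ) + 1))| := by
          rw [Real.norm_eq_abs, abs_mul, abs_div, abs_pow, Nat.abs_cast]
      _ ≤ (|x| ^ j / (j.factorial : ℝ)) * (C + (j+1)) := by
          gcongr
      _ = (C + 1 + j) * |x| ^ j / j.factorial := by ring
  -- reindex the derivative series
  have hT : (∑' j : ℕ, ((j:ℝ) * x ^ (j-1) / j.factorial) * psi ((j:ℝ) + ((k:ℝ) + 1)))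
      = ∑' j : ℕ, x ^ j / (j.factorial : ℝ) * psi ((j:ℝ) + 1 + ((k:ℝ) + 1)) := by
    rw [Summable.tsum_eq_zero_add hSum']
    simp only [Nat.cast_zero, zero_mul, zero_div, zero_mul, zero_add]
    apply tsum_congr
    intro j
    have hf : (j.factorial : ℝ) ≠ 0 := Nat.cast_ne_zero.mpr (Nat.factorial_ne_zero j)
    rw [Nat.add_sub_cancel, Nat.factorial_succ]
    push_cast
    field_simp
  -- derivative of phi
  have hexp : HasDerivAt (fun z : ℝ => Real.exp (-z)) (Real.exp (-x) * (-1)) x :=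
    (Real.hasDerivAt_exp (-x)).comp x (hasDerivAt_neg x)
  have hphi := hexp.mul hS
  have hphi' : deriv (phi ((k:ℕ)+1 : ℕ)) x =
      Real.exp (-x) * (-1) * (∑' j : ℕ, x ^ j / (j.factorial : ℝ) * psi ((j:ℝ) + ((k:ℝ) + 1)))
      + Real.exp (-x) * (∑' j : ℕ, x ^ j / (j.factorial : ℝ) * psi ((j:ℝ) + 1 + ((k:ℝ) + 1))) := by
    rw [← hT]
    have hrep : phi ((k:ℕ)+1 : ℕ) = fun z : ℝ =>
        Real.exp (-z) * ∑' j : ℕ, z ^ j / (j.factorial : ℝ) * psi ((j:ℝ) + ((k:ℝ) + 1)) := by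
      funext z
      unfold phi
      push_cast
      rfl
    rw [hrep]
    exact hphi.deriv
  -- combine the two series
  have hcomb : (∑' j : ℕ, x ^ j / (j.factorial : ℝ) * psi ((j:ℝ) + 1 + ((k:ℝ) + 1)))
      - (∑' j : ℕ, x ^ j / (j.factorial : ℝ) * psi ((j:ℝ) + ((k:ℝ) + 1)))
      = ∑' j : ℕ, x ^ j / ((j.factorial : ℝ) * ((j:ℝ) + ((k:ℝ) + 1))) := by
    rw [← Summable.tsum_sub hSum2 hSumS]
    apply tsum_congr
    intro j
    have hj1 : (0:ℝ) < (j:ℝ) + ((k:ℝ) + 1) := by positivity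
    have hrec : psi (((j:ℝ) + ((k:ℝ) + 1)) + 1) = psi ((j:ℝ) + ((k:ℝ) + 1)) + 1 / ((j:ℝ) + ((k:ℝ) + 1)) :=
      psi_add_one hj1
    rw [show (j:ℝ) + 1 + ((k:ℝ) + 1) = ((j:ℝ) + ((k:ℝ) + 1)) + 1 by ring, hrec]
    field_simp
    ring
  -- relate to Lf
  have hLf : Lf k x = x ^ (k+1) * ∑' j : ℕ, x ^ j / ((j.factorial : ℝ) * ((j:ℝ) + ((k:ℝ) + 1))) := by
    unfold Lf
    rw [← tsum_mul_left]
    apply tsum_congr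
    intro j
    rw [show j + k + 1 = j + (k+1) by ring, pow_add]
    ring
  have hD := hphi'
  rw [show Real.exp (-x) * (-1) * (∑' j : ℕ, x ^ j / (j.factorial : ℝ) * psi ((j:ℝ) + ((k:ℝ) + 1)))
      + Real.exp (-x) * (∑' j : ℕ, x ^ j / (j.factorial : ℝ) * psi ((j:ℝ) + 1 + ((k:ℝ) + 1)))
      = Real.exp (-x) * ((∑' j : ℕ, x ^ j / (j.factorial : ℝ) * psi ((j:ℝ) + 1 + ((k:ℝ) + 1)))
        - (∑' j : ℕ, x ^ j / (j.factorial : ℝ) * psi ((j:ℝ) + ((k:ℝ) + 1)))) by ring,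
    hcomb] at hD
  -- final algebra
  have hRf := Lf_eq_Rf k x
  rw [hLf] at hRf
  have hxk : (x:ℝ) ^ (k+1) ≠ 0 := by positivity
  have hD2 : ∑' j : ℕ, x ^ j / ((j.factorial : ℝ) * ((j:ℝ) + ((k:ℝ) + 1))) = Rf k x / x ^ (k+1) := by
    field_simp at hRf ⊢
    linarith [hRf]
  rw [hD2] at hD
  rw [hD]
  unfold Rf
  have hmk : (k + 1 : ℕ) - 1 = k := by omega
  rw [hmk]
  have hneg : (-x) ^ (k+1) = (-1)^(k+1) * x^(k+1) := by rw [neg_pow]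
  have hsq : ((-1:ℝ)) ^ (k+1) * (-1) ^ (k+1) = 1 := by
    rw [← pow_add]; exact Even.neg_one_pow ⟨k+1, by ring⟩
  have hexp1 : Real.exp (-x) * Real.exp x = 1 := by
    rw [← Real.exp_add]; simp
  rw [hneg]
  have hne1 : ((-1:ℝ))^(k+1) ≠ 0 := by
    intro h; have := hsq; rw [h] at this; simp at this
  have hq2 : ((-1:ℝ)) ^ (k*2) = 1 := by
    rw [mul_comm, pow_mul]; norm_num
  field_simp
  linear_combination (Real.exp (-x) - (∑ i ∈ Finset.range (k+1), (-x)^i/(i.factorial:ℝ)) * Real.exp (-x) * Real.exp x) * hsq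
    - (∑ i ∈ Finset.range (k+1), (-x)^i/(i.factorial:ℝ)) * hexp1
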